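/- For all P, Q ∈ Γ_n, the relative arithmetic-geometric divergence satisfies 0 ≤ G(P||Q) ≤ (1/2)[χ²(Q||P) - D(Q||P)], where G(P||Q) = ∑((p_i+q_i)/2)ln((p_i+q_i)/(2p_i)), χ²(Q||P) = ∑(q_i - p_i)²/p_i, and D(Q||P) = ∑(q_i - p_i)ln((p_i+q_i)/(2p_i)). -/

import Mathlib

open Finset Real

theorem stmt19 (n : ℕ) (p q : Fin n → ℝ)
    (hp : ∀ i, 0 < p i) (hq : ∀ i, 0 < q i)
    (hp1 : ∑ i, p i = 1) (hq1 : ∑ i, q i = 1) :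
    0 ≤ ∑ i, ((p i + q i)/2) * Real.log ((p i + q i) / (2 * p i)) ∧ (∑ i, ((p i + q i)/2) * Real.log ((p i + q i) / (2 * p i))) ≤ (1/2) * ((∑ i, (q i - p i)^2 / p i) - (∑ i, (q i - p i) * Real.log ((p i + q i) / (2 * p i)))) := by
  have hL_le : ∀ i, Real.log ((p i + q i) / (2 * p i)) ≤ (q i - p i) / (2 * p i) := by
    intro i
    have hpi := hp i; have hqi := hq i
    have h := Real.log_le_sub_one_of_pos
      (show 0 < (p i + q i) / (2 * p i) from div_pos (by linarith) (by linarith))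
    have h2 : (p i + q i) / (2 * p i) - 1 = (q i - p i) / (2 * p i) := by
      field_simp; ring
    linarith
  constructor
  · -- lower bound
    have hlow : ∀ i ∈ Finset.univ, (p i + q i)/2 - p i ≤
        ((p i + q i)/2) * Real.log ((p i + q i) / (2 * p i)) := by
      intro i _
      have hpi := hp i; have hqi := hq i
      have h := Real.log_le_sub_one_of_pos
        (show 0 < ((p i + q i) / (2 * p i))⁻¹ from by
          apply inv_pos.mpr; exact div_pos (by linarith) (by linarith))
      rw [Real.log_inv, inv_div] at h
      have h6 : (p i + q i)/2 - p i = ((p i + q i)/2) * (1 - (2 * p i)/(p i + q i)) := by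
        field_simp
      rw [h6]
      exact mul_le_mul_of_nonneg_left (by linarith) (by linarith)
    have hsum := Finset.sum_le_sum hlow
    have hs0 : ∑ i, ((p i + q i)/2 - p i) = 0 := by
      have : ∑ i, ((p i + q i)/2 - p i) = ∑ i, (q i / 2 - p i / 2) :=
        Finset.sum_congr rfl (fun i _ => by ring)
      rw [this, Finset.sum_sub_distrib, ← Finset.sum_div, ← Finset.sum_div, hp1, hq1]
      norm_num
    linarith
  · -- upper bound
    have key : ∀ i ∈ Finset.univ, ((p i + q i)/2) * Real.log ((p i + q i) / (2 * p i)) ≤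
        (1/2) * ((q i - p i)^2 / p i) - (1/2) * ((q i - p i) * Real.log ((p i + q i) / (2 * p i)))
          + (1/2) * (q i - p i) := by
      intro i _
      have hpi := hp i; have hqi := hq i
      have h1 : q i * Real.log ((p i + q i) / (2 * p i)) ≤ q i * ((q i - p i) / (2 * p i)) :=
        mul_le_mul_of_nonneg_left (hL_le i) hqi.le
      have h2 : q i * ((q i - p i) / (2 * p i)) =
          (1/2) * ((q i - p i)^2 / p i) + (1/2) * (q i - p i) := by
        field_simp; ring
      have h3 : ((p i + q i)/2) * Real.log ((p i + q i) / (2 * p i)) =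
          q i * Real.log ((p i + q i) / (2 * p i))
            - (1/2) * ((q i - p i) * Real.log ((p i + q i) / (2 * p i))) := by ring
      rw [h3]
      linarith [h1, h2]
    have hsum := Finset.sum_le_sum key
    have hs0 : ∑ i, (q i - p i) = 0 := by
      rw [Finset.sum_sub_distrib, hp1, hq1]; ring
    rw [Finset.sum_add_distrib, Finset.sum_sub_distrib, ← Finset.mul_sum, ← Finset.mul_sum,
      ← Finset.mul_sum, hs0] at hsum
    linarith
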